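/- Let w be an ultrafilter on ℤ such that the set P₀ = {p prime : there exists k ≥ 0 with p^(k+1)ℤ ∉ w} is finite, with witness exponent φ(p) = max{k : p^kℤ ∈ w} for p ∈ P₀. Then w is self-divisible, i.e., D(w) = {n : nℤ ∈ w} belongs to w. -/
import Mathlib


/-- `D u` is the set of integers dividing the ultrafilter `u`. -/
def D (u : Ultrafilter ℤ) : Set ℤ := {n : ℤ | {x : ℤ | n ∣ x} ∈ u}

theorem stmt_12 (w : Ultrafilter ℤ)
    (hfin : {p : ℤ | Prime p ∧ ∃ k : ℕ, {x : ℤ | p ^ (k + 1) ∣ x} ∉ w}.Finite) :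
    D w ∈ w := by
  classical
  by_cases h0 : ({(0:ℤ)} : Set ℤ) ∈ w
  · refine Filter.mem_of_superset h0 ?_
    intro x hx
    rcases hx with rfl
    show {y : ℤ | (0:ℤ) ∣ y} ∈ w
    have : {y : ℤ | (0:ℤ) ∣ y} = {(0:ℤ)} := by ext y; simp [zero_dvd_iff]
    rw [this]; exact h0
  · have h0' : ({(0:ℤ)} : Set ℤ)ᶜ ∈ w := (Ultrafilter.compl_mem_iff_notMem).mpr h0
    set K : ℤ → ℕ := fun p =>
      if h : ∃ k : ℕ, {x : ℤ | p ^ (k + 1) ∣ x} ∉ w then Nat.find h else 0 with hKdef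
    set P := hfin.toFinset with hPdef
    set A : ℤ → Set ℤ := fun p => {x : ℤ | p ^ (K p) ∣ x} ∩ ({x : ℤ | p ^ (K p + 1) ∣ x})ᶜ
      with hAdef
    have hKfind : ∀ p : ℤ, ∀ h : ∃ k : ℕ, {x : ℤ | p ^ (k + 1) ∣ x} ∉ w,
        K p = Nat.find h := by
      intro p h; simp only [hKdef, dif_pos h]
    have hA : ∀ p ∈ P, A p ∈ w := by
      intro p hp
      rw [hPdef, Set.Finite.mem_toFinset] at hp
      obtain ⟨hprime, hex⟩ := hp
      have hKp := hKfind p hex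
      refine Filter.inter_mem ?_ ?_
      · rcases Nat.eq_zero_or_pos (K p) with h | h
        · simp [h]
        · obtain ⟨m, hm⟩ := Nat.exists_eq_succ_of_ne_zero h.ne'
          have hmlt : m < Nat.find hex := by omega
          have := Nat.find_min hex hmlt
          rw [not_not] at this
          rw [hm]; exact this
      · refine (Ultrafilter.compl_mem_iff_notMem).mpr ?_
        rw [hKp]; exact Nat.find_spec hex
    have hS : (⋂ p ∈ P, A p) ∈ w := (Filter.biInter_finset_mem P).mpr hA
    refine Filter.mem_of_superset (Filter.inter_mem hS h0') ?_
    rintro x ⟨hxS, hx0⟩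
    have hx0' : x ≠ 0 := by simpa using hx0
    set n := x.natAbs with hn
    have hn0 : n ≠ 0 := Int.natAbs_ne_zero.mpr hx0'
    -- each prime power factor's divisibility set is in w
    have hmemw : ∀ q ∈ n.primeFactors, {y : ℤ | (q:ℤ) ^ (n.factorization q) ∣ y} ∈ w := by
      intro q hq
      have hqprime : q.Prime := Nat.prime_of_mem_primeFactors hq
      set v := n.factorization q with hv
      rcases Nat.eq_zero_or_pos v with h | hvpos
      · simp only [h, pow_zero, one_dvd]
        exact Filter.univ_mem
      · obtain ⟨m, hm⟩ := Nat.exists_eq_succ_of_ne_zero hvpos.ne'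
        by_cases hmem : ∃ k : ℕ, {y : ℤ | (q:ℤ) ^ (k + 1) ∣ y} ∉ w
        · -- q is in P₀
          have hqP : (q:ℤ) ∈ P := by
            rw [hPdef, Set.Finite.mem_toFinset]
            exact ⟨Nat.prime_iff_prime_int.mp hqprime, hmem⟩
          have hxA : x ∈ A (q:ℤ) := Set.mem_iInter₂.mp hxS (q:ℤ) hqP
          obtain ⟨hx1, hx2⟩ := hxA
          -- q^v ∣ x
          have hqvx : (q:ℤ) ^ v ∣ x := by
            have h1 : (q:ℕ) ^ v ∣ n := Nat.ordProj_dvd n q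
            have h2 : (q:ℤ) ^ v ∣ (n : ℤ) := by exact_mod_cast h1
            have h3 : (n : ℤ) ∣ x := Int.natAbs_dvd.mpr dvd_rfl
            exact dvd_trans h2 h3
          have hvK : v ≤ K (q:ℤ) := by
            by_contra hlt
            push_neg at hlt
            exact hx2 (dvd_trans (pow_dvd_pow _ hlt) hqvx)
          refine Filter.mem_of_superset (Filter.mem_of_superset (hA _ hqP)
            Set.inter_subset_left) ?_
          intro y hy
          exact dvd_trans (pow_dvd_pow _ hvK) hy
        · push_neg at hmem
          rw [hm]; exact hmem m
    have hInter : (⋂ q ∈ n.primeFactors, {y : ℤ | (q:ℤ) ^ (n.factorization q) ∣ y}) ∈ w :=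
      (Filter.biInter_finset_mem n.primeFactors).mpr hmemw
    refine Filter.mem_of_superset hInter ?_
    intro y hy
    have hy' : ∀ q ∈ n.primeFactors, (q:ℤ) ^ (n.factorization q) ∣ y := by
      intro q hq; exact Set.mem_iInter₂.mp hy q hq
    show x ∣ y
    have hprod : (∏ q ∈ n.primeFactors, (q:ℤ) ^ (n.factorization q)) = (n:ℤ) := by
      have := Nat.factorization_prod_pow_eq_self hn0
      have h2 : (∏ q ∈ n.primeFactors, q ^ (n.factorization q)) = n := by
        rw [← Nat.support_factorization]; exact this
      calc (∏ q ∈ n.primeFactors, (q:ℤ) ^ (n.factorization q))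
          = ((∏ q ∈ n.primeFactors, q ^ (n.factorization q) : ℕ) : ℤ) := by push_cast; ring
        _ = (n:ℤ) := by rw [h2]
    have hdvd : (∏ q ∈ n.primeFactors, (q:ℤ) ^ (n.factorization q)) ∣ y := by
      refine Finset.prod_dvd_of_coprime ?_ hy'
      intro a ha b hb hab
      have hap : (a:ℕ).Prime := Nat.prime_of_mem_primeFactors ha
      have hbp : (b:ℕ).Prime := Nat.prime_of_mem_primeFactors hb
      have hcop : Nat.Coprime (a ^ n.factorization a) (b ^ n.factorization b) :=
        ((Nat.coprime_primes hap hbp).mpr hab).pow _ _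
      have := Nat.isCoprime_iff_coprime.mpr hcop
      simpa [Function.onFun] using this
    have : (n:ℤ) ∣ y := hprod ▸ hdvd
    exact (Int.natAbs_dvd).mp this
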